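/- In the two-sided card model, if i ≤ j then Pr[X^i > Y^j] ≥ p(i, j), where p(i, j) = Σ_{k=0}^{j-1} C(i-1+k, k)/2^{i+k}; symmetrically if i ≥ j then Pr[X^i > Y^j] ≤ p(i, j). -/

import Mathlib

open scoped Classical

/-- The `k`-th largest element (1-indexed) of a finite set of reals, defaulting to `0`. -/
noncomputable def kthLargest (s : Finset ℝ) (k : ℕ) : ℝ :=
  ((s.sort (· ≤ ·)).reverse).getD (k - 1) 0

/-- The probability of an event under the uniform distribution on a finite type. -/
noncomputable def uniformPr {α : Type*} [Fintype α] (E : α → Prop) : ℝ :=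
  ((Finset.univ.filter E).card : ℝ) / (Fintype.card α : ℝ)



lemma card_filter_eq_countP (s : Finset ℝ) (p : ℝ → Prop) [DecidablePred p] :
    (s.filter p).card = (s.sort (· ≤ ·)).countP (fun x => decide (p x)) := by
  have h1 : ((s.sort (· ≤ ·) : List ℝ) : Multiset ℝ) = s.val := Finset.sort_eq _ _
  rw [Finset.card, Finset.filter_val, ← Multiset.countP_eq_card_filter, ← h1,
    Multiset.coe_countP]

lemma kthLargest_eq_getElem (s : Finset ℝ) (k : ℕ) (hk : 1 ≤ k) (hks : k ≤ s.card) :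
    ∃ h : s.card - k < (s.sort (· ≤ ·)).length, kthLargest s k = (s.sort (· ≤ ·))[s.card - k] := by
  have hlen : (s.sort (· ≤ ·)).length = s.card := Finset.length_sort _
  have h1 : k - 1 < (s.sort (· ≤ ·)).reverse.length := by
    rw [List.length_reverse, hlen]; omega
  refine ⟨by omega, ?_⟩
  rw [kthLargest, List.getD_eq_getElem _ _ h1, List.getElem_reverse]
  congr 1
  rw [hlen]; omega

lemma le_kthLargest (s : Finset ℝ) (k : ℕ) (v : ℝ) (hk : 1 ≤ k)
    (h : k ≤ (s.filter (fun x => v ≤ x)).card) : v ≤ kthLargest s k := by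
  have hks : k ≤ s.card := le_trans h (Finset.card_filter_le _ _)
  obtain ⟨hlt, heq⟩ := kthLargest_eq_getElem s k hk hks
  rw [heq]
  by_contra hcon
  push_neg at hcon
  set l := s.sort (· ≤ ·) with hl
  have hlen : l.length = s.card := Finset.length_sort _
  have hsort : List.Pairwise (· ≤ ·) l := Finset.pairwise_sort _ _
  have hcount : (s.filter (fun x => v ≤ x)).card = l.countP (fun x => decide (v ≤ x)) :=
    card_filter_eq_countP s _
  have hsplit := List.take_append_drop (s.card - k + 1) l
  have hc1 : l.countP (fun x => decide (v ≤ x)) =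
      (l.take (s.card - k + 1)).countP (fun x => decide (v ≤ x)) +
      (l.drop (s.card - k + 1)).countP (fun x => decide (v ≤ x)) := by
    conv_lhs => rw [← hsplit]
    rw [List.countP_append]
  have htake : (l.take (s.card - k + 1)).countP (fun x => decide (v ≤ x)) = 0 := by
    rw [List.countP_eq_zero]
    intro x hx
    rw [List.mem_take_iff_getElem] at hx
    obtain ⟨idx, hidx, hxe⟩ := hx
    have hidx2 : idx < l.length := lt_of_lt_of_le hidx (min_le_right _ _)
    have hle : l[idx] ≤ l[s.card - k] := by
      rcases lt_or_eq_of_le (by omega : idx ≤ s.card - k) with h' | h'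
      · exact (List.pairwise_iff_getElem.mp hsort) idx (s.card - k) hidx2 hlt h'
      · subst h'; exact le_refl _
    simp only [decide_eq_true_eq]
    rw [← hxe]
    intro hvx
    exact absurd (le_trans hvx hle) (not_le.mpr hcon)
  have hdrop : (l.drop (s.card - k + 1)).countP (fun x => decide (v ≤ x)) ≤ k - 1 := by
    calc (l.drop (s.card - k + 1)).countP (fun x => decide (v ≤ x))
        ≤ (l.drop (s.card - k + 1)).length := List.countP_le_length
      _ = l.length - (s.card - k + 1) := List.length_drop
      _ ≤ k - 1 := by omega
  omega

lemma kthLargest_lt (s : Finset ℝ) (k : ℕ) (v : ℝ) (hks : k ≤ s.card)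
    (h : (s.filter (fun x => v ≤ x)).card < k) : kthLargest s k < v := by
  have hk : 1 ≤ k := by
    rcases Nat.eq_zero_or_pos k with h0 | h0
    · omega
    · exact h0
  obtain ⟨hlt, heq⟩ := kthLargest_eq_getElem s k hk hks
  rw [heq]
  by_contra hcon
  push_neg at hcon
  set l := s.sort (· ≤ ·) with hl
  have hlen : l.length = s.card := Finset.length_sort _
  have hsort : List.Pairwise (· ≤ ·) l := Finset.pairwise_sort _ _
  have hcount : (s.filter (fun x => v ≤ x)).card = l.countP (fun x => decide (v ≤ x)) :=
    card_filter_eq_countP s _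
  have hdrop : (l.drop (s.card - k)).countP (fun x => decide (v ≤ x)) =
      (l.drop (s.card - k)).length := by
    rw [List.countP_eq_length]
    intro x hx
    rw [List.mem_drop_iff_getElem] at hx
    obtain ⟨idx, hidx, hxe⟩ := hx
    have hge : l[s.card - k] ≤ l[s.card - k + idx]'(by omega) := by
      rcases Nat.eq_zero_or_pos idx with h' | h'
      · subst h'; simp
      · exact (List.pairwise_iff_getElem.mp hsort) _ _ hlt (by omega) (by omega)
    rw [← hxe]
    simp only [decide_eq_true_eq]
    exact le_trans hcon hge
  have hlendrop : (l.drop (s.card - k)).length = k := by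
    rw [List.length_drop]; omega
  have hsub : (l.drop (s.card - k)).countP (fun x => decide (v ≤ x)) ≤
      l.countP (fun x => decide (v ≤ x)) := (List.drop_sublist _ _).countP_le
  omega


def Tsum (M r : ℕ) : ℕ := ∑ t ∈ Finset.range (M+1), if r ≤ t then M.choose t else 0

lemma Tsum_zero (M : ℕ) : Tsum M 0 = 2 ^ M := by
  rw [Tsum]; simp [Nat.sum_range_choose]

lemma Tsum_succ_left' (M s : ℕ) : Tsum (M+1) (s+1) = Tsum M (s+1) + Tsum M s := by
  rw [Tsum, Finset.sum_range_succ']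
  rw [if_neg (by omega : ¬ s + 1 ≤ 0), add_zero]
  have step : ∀ t ∈ Finset.range (M+1),
      (if s + 1 ≤ t + 1 then (M+1).choose (t+1) else 0)
      = (if s ≤ t then M.choose (t+1) else 0) + (if s ≤ t then M.choose t else 0) := by
    intro t ht
    by_cases hst : s ≤ t
    · rw [if_pos (by omega), if_pos hst, if_pos hst, Nat.choose_succ_succ', Nat.add_comm]
    · rw [if_neg (by omega), if_neg hst, if_neg hst]
  rw [Finset.sum_congr rfl step, Finset.sum_add_distrib]
  have h2 : ∑ t ∈ Finset.range (M+1), (if s ≤ t then M.choose (t+1) else 0)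
      = Tsum M (s+1) := by
    rw [Tsum, Finset.sum_range_succ, Finset.sum_range_succ']
    rw [if_neg (by omega : ¬ s + 1 ≤ 0), add_zero, Nat.choose_succ_self, ite_self, add_zero]
    apply Finset.sum_congr rfl
    intro t ht
    by_cases hst : s ≤ t
    · rw [if_pos hst, if_pos (by omega)]
    · rw [if_neg hst, if_neg (by omega)]
  have hA : ∑ t ∈ Finset.range (M+1), (if s ≤ t then M.choose t else 0) = Tsum M s := rfl
  rw [h2, hA]

lemma Tsum_succ_left (M r : ℕ) : Tsum (M+1) r = Tsum M r + Tsum M (r-1) := by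
  rcases Nat.eq_zero_or_pos r with h0 | h0
  · subst h0; rw [Tsum_zero, Tsum_zero, pow_succ]; ring
  obtain ⟨s, rfl⟩ : ∃ s, r = s + 1 := ⟨r - 1, by omega⟩
  rw [Nat.add_sub_cancel]
  exact Tsum_succ_left' M s

lemma Tsum_eq_choose_add (M r : ℕ) : Tsum M r = M.choose r + Tsum M (r+1) := by
  rcases le_or_gt r M with h | h
  · have step : ∀ t ∈ Finset.range (M+1),
        (if r ≤ t then M.choose t else 0)
        = (if t = r then M.choose r else 0) + (if r + 1 ≤ t then M.choose t else 0) := by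
      intro t ht
      by_cases h1 : t = r
      · subst h1; rw [if_pos le_rfl, if_pos rfl, if_neg (by omega), add_zero]
      · by_cases h2 : r ≤ t
        · rw [if_pos h2, if_neg h1, if_pos (by omega), zero_add]
        · rw [if_neg h2, if_neg h1, if_neg (by omega), add_zero]
    rw [Tsum, Finset.sum_congr rfl step, Finset.sum_add_distrib,
      Finset.sum_ite_eq' (Finset.range (M+1)) r, if_pos (Finset.mem_range.mpr (by omega))]
    rfl
  · have hC : M.choose r = 0 := Nat.choose_eq_zero_of_lt h
    rw [hC, zero_add, Tsum, Tsum]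
    apply Finset.sum_congr rfl
    intro t ht
    have ht' := Finset.mem_range.mp ht
    rw [if_neg (by omega), if_neg (by omega)]

lemma Tsum_anti (M : ℕ) {r s : ℕ} (h : r ≤ s) : Tsum M s ≤ Tsum M r := by
  rw [Tsum, Tsum]
  apply Finset.sum_le_sum
  intro t ht
  by_cases hst : s ≤ t
  · rw [if_pos hst, if_pos (le_trans h hst)]
  · rw [if_neg hst]; exact Nat.zero_le _

lemma Tsum_le_pow (M r : ℕ) : Tsum M r ≤ 2 ^ M := by
  rw [← Tsum_zero M]; exact Tsum_anti M (Nat.zero_le r)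

lemma key_lower (M r : ℕ) (h : 2 * r ≤ M + 3) : Tsum (M+2) r ≤ 4 * Tsum M (r-1) := by
  match r with
  | 0 =>
      rw [Nat.zero_sub, Tsum_zero, Tsum_zero]
      calc (2:ℕ) ^ (M+2) = 4 * 2 ^ M := by ring
        _ ≤ 4 * 2 ^ M := le_rfl
  | 1 =>
      rw [show (1:ℕ) - 1 = 0 from rfl, Tsum_zero]
      calc Tsum (M+2) 1 ≤ 2 ^ (M+2) := Tsum_le_pow _ _
        _ = 4 * 2 ^ M := by ring
  | (s+2) =>
      have hM : 2 * s + 1 ≤ M := by omega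
      have key : M.choose s ≤ M.choose (s+1) := by
        have h1 := Nat.choose_succ_right_eq M s
        have h3 : M.choose s * (s+1) ≤ M.choose s * (M - s) :=
          Nat.mul_le_mul_left _ (by omega)
        rw [← h1] at h3
        exact Nat.le_of_mul_le_mul_right h3 (by omega)
      have e1 : Tsum (M+2) (s+2) = Tsum M (s+2) + 2 * Tsum M (s+1) + Tsum M s := by
        rw [show M+2 = (M+1)+1 from rfl, Tsum_succ_left' (M+1) (s+1),
          Tsum_succ_left' M (s+1), Tsum_succ_left' M s]
        ring
      have e2 : Tsum M s = Tsum M (s+1) + M.choose s := by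
        rw [Tsum_eq_choose_add M s]; ring
      have e3 : Tsum M (s+1) = Tsum M (s+2) + M.choose (s+1) := by
        rw [Tsum_eq_choose_add M (s+1)]; ring
      show Tsum (M+2) (s+2) ≤ 4 * Tsum M (s+1)
      omega

lemma key_upper (M r : ℕ) (h : M + 3 ≤ 2 * r) : 4 * Tsum M (r-1) ≤ Tsum (M+2) r := by
  obtain ⟨s, rfl⟩ : ∃ s, r = s + 2 := ⟨r - 2, by omega⟩
  have hM : M ≤ 2 * s + 1 := by omega
  have key : M.choose (s+1) ≤ M.choose s := by
    have h1 := Nat.choose_succ_right_eq M s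
    have h3 : M.choose s * (M - s) ≤ M.choose s * (s+1) :=
      Nat.mul_le_mul_left _ (by omega)
    rw [← h1] at h3
    exact Nat.le_of_mul_le_mul_right h3 (by omega)
  have e1 : Tsum (M+2) (s+2) = Tsum M (s+2) + 2 * Tsum M (s+1) + Tsum M s := by
    rw [show M+2 = (M+1)+1 from rfl, Tsum_succ_left' (M+1) (s+1),
      Tsum_succ_left' M (s+1), Tsum_succ_left' M s]
    ring
  have e2 : Tsum M s = Tsum M (s+1) + M.choose s := by
    rw [Tsum_eq_choose_add M s]; ring
  have e3 : Tsum M (s+1) = Tsum M (s+2) + M.choose (s+1) := by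
    rw [Tsum_eq_choose_add M (s+1)]; ring
  show 4 * Tsum M (s+1) ≤ Tsum (M+2) (s+2)
  omega

lemma Tsum_of_lt {M r : ℕ} (h : M < r) : Tsum M r = 0 := by
  rw [Tsum]
  apply Finset.sum_eq_zero
  intro t ht
  have := Finset.mem_range.mp ht
  rw [if_neg (by omega)]

lemma chain_lower (m i : ℕ) (hi : 2*i ≤ m+1) :
    ∀ c, 2*c ≤ m → Tsum m i ≤ 4^c * Tsum (m - 2*c) (i - c) := by
  intro c
  induction c with
  | zero => intro _; simp
  | succ c ih =>
      intro hc
      have ih' := ih (by omega)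
      set M := m - 2*(c+1) with hM
      have hM2 : m - 2*c = M + 2 := by omega
      have hkey := key_lower M (i-c) (by omega)
      have hsub : i - c - 1 = i - (c+1) := by omega
      rw [hsub, ← hM2] at hkey
      calc Tsum m i ≤ 4^c * Tsum (m - 2*c) (i - c) := ih'
        _ ≤ 4^c * (4 * Tsum (m - 2*(c+1)) (i - (c+1))) := by
            exact Nat.mul_le_mul_left _ (hM2 ▸ hkey)
        _ = 4^(c+1) * Tsum (m - 2*(c+1)) (i - (c+1)) := by ring

lemma chain_upper (m i : ℕ) (hi : m + 1 ≤ 2*i) :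
    ∀ c, 2*c ≤ m → 4^c * Tsum (m - 2*c) (i - c) ≤ Tsum m i := by
  intro c
  induction c with
  | zero => intro _; simp
  | succ c ih =>
      intro hc
      have ih' := ih (by omega)
      set M := m - 2*(c+1) with hM
      have hM2 : m - 2*c = M + 2 := by omega
      have hic : c < i := by omega
      have hkey := key_upper M (i-c) (by omega)
      have hsub : i - c - 1 = i - (c+1) := by omega
      rw [hsub] at hkey
      calc 4^(c+1) * Tsum (m - 2*(c+1)) (i - (c+1))
          = 4^c * (4 * Tsum M (i - (c+1))) := by ring
        _ ≤ 4^c * Tsum (M+2) (i-c) := Nat.mul_le_mul_left _ hkey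
        _ = 4^c * Tsum (m - 2*c) (i-c) := by rw [hM2]
        _ ≤ Tsum m i := ih'

lemma p_identity (i : ℕ) (hi : 1 ≤ i) :
    ∀ j, ∑ k ∈ Finset.range j, (i-1+k).choose k * 2^(j-1-k) = Tsum (i+j-1) i := by
  intro j
  induction j with
  | zero =>
      simp
      rw [Tsum_of_lt (by omega)]
  | succ j ih =>
      rw [Finset.sum_range_succ]
      have hstep : ∀ k ∈ Finset.range j,
          (i-1+k).choose k * 2^(j+1-1-k) = 2 * ((i-1+k).choose k * 2^(j-1-k)) := by
        intro k hk
        have hk' := Finset.mem_range.mp hk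
        have : j+1-1-k = (j-1-k) + 1 := by omega
        rw [this, pow_succ]
        ring
      rw [Finset.sum_congr rfl hstep, ← Finset.mul_sum, ih]
      have hm : i + (j+1) - 1 = (i + j - 1) + 1 := by omega
      rw [hm, Tsum_succ_left]
      have hi1 : i - 1 + 1 = i := by omega
      have h2 : Tsum (i+j-1) (i-1) = (i+j-1).choose (i-1) + Tsum (i+j-1) i := by
        have := Tsum_eq_choose_add (i+j-1) (i-1)
        rwa [hi1] at this
      have hsymm : (i+j-1).choose (i-1) = (i-1+j).choose j := by
        have h3 : i + j - 1 - j = i - 1 := by omega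
        have := Nat.choose_symm (show j ≤ i+j-1 by omega)
        rw [h3] at this
        rw [this]
        congr 1
        omega
      have : j + 1 - 1 - j = 0 := by omega
      rw [this, pow_zero, mul_one, h2, hsymm]
      ring




section Counting

variable {n : ℕ} (pair : Fin (2*n) → Fin (2*n))
  (hinv : ∀ x, pair (pair x) = x) (hnf : ∀ x, pair x ≠ x) (m : ℕ)

include hinv

-- injectivity of pair
lemma pair_inj : Function.Injective pair := by
  intro x y h
  have := congrArg pair h
  rwa [hinv, hinv] at this

omit hinv

-- the canonical element of Ω
noncomputable def omega0 (hinv : ∀ x, pair (pair x) = x) (hnf : ∀ x, pair x ≠ x) :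
    {f : Fin (2*n) → Bool // ∀ x, f (pair x) = !(f x)} := by
  refine ⟨fun x => decide (x < pair x), ?_⟩
  intro x
  by_cases h : x < pair x
  · have h2 : ¬ pair x < pair (pair x) := by rw [hinv]; exact lt_asymm h
    simp [h, h2]
  · have h2 : pair x < x := by
      rcases lt_or_gt_of_ne (hnf x) with h' | h'
      · exact h'
      · exact absurd h' h
    have h3 : pair x < pair (pair x) := by rw [hinv]; exact h2
    simp [h, h3]

-- each f ∈ Ω splits P (a pair-invariant set) in half
lemma half_card (hinv : ∀ x, pair (pair x) = x)
    (f : {f : Fin (2*n) → Bool // ∀ x, f (pair x) = !(f x)})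
    (P : Finset (Fin (2*n))) (hP : ∀ x ∈ P, pair x ∈ P) :
    (P.filter (fun x => f.1 x = true)).card * 2 = P.card := by
  have hAB : (P.filter (fun x => f.1 x = true)).card
      = (P.filter (fun x => ¬ f.1 x = true)).card := by
    apply Finset.card_bij (fun x _ => pair x)
    · intro x hx
      rw [Finset.mem_filter] at hx ⊢
      refine ⟨hP x hx.1, ?_⟩
      rw [f.2 x, hx.2]
      simp
    · intro x hx y hy h
      exact pair_inj pair hinv h
    · intro y hy
      rw [Finset.mem_filter] at hy
      refine ⟨pair y, Finset.mem_filter.mpr ⟨hP y hy.1, ?_⟩, hinv y⟩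
      rw [f.2 y]
      simp only [Bool.not_eq_true] at hy
      rw [hy.2]
      simp
  have := Finset.card_filter_add_card_filter_not
    (s := P) (p := fun x => f.1 x = true)
  omega

/-- The main counting lemma. -/
lemma count_main (hinv : ∀ x, pair (pair x) = x) (hnf : ∀ x, pair x ≠ x)
    (i : ℕ) (hm : m ≤ 2*n) :
    ∃ c : ℕ, 2*c ≤ m ∧
      uniformPr (fun f : {f : Fin (2*n) → Bool // ∀ x, f (pair x) = !(f x)} =>
          i ≤ (Finset.univ.filter (fun x => x.val < m ∧ f.1 x = true)).card)
        = (Tsum (m - 2*c) (i - c) : ℝ) / 2^(m - 2*c) := by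
  classical
  set Top : Finset (Fin (2*n)) := Finset.univ.filter (fun x => x.val < m) with hTop
  set P : Finset (Fin (2*n)) := Top.filter (fun x => (pair x).val < m) with hPdef
  set F : Finset (Fin (2*n)) := Top.filter (fun x => ¬ (pair x).val < m) with hFdef
  -- cardinality of Top
  have hTopCard : Top.card = m := by
    rw [← Finset.card_range m]
    refine Finset.card_bij' (fun (x : Fin (2*n)) (_ : x ∈ Top) => x.val)
      (fun b (hb : b ∈ Finset.range m) =>
        (⟨b, by have := Finset.mem_range.mp hb; omega⟩ : Fin (2*n))) ?_ ?_ ?_ ?_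
    · intro x hx
      simp only [hTop, Finset.mem_filter] at hx
      exact Finset.mem_range.mpr hx.2
    · intro b hb
      simp only [hTop, Finset.mem_filter]
      exact ⟨Finset.mem_univ _, Finset.mem_range.mp hb⟩
    · intro x hx
      exact Fin.ext rfl
    · intro b hb
      rfl
  have hPF : P.card + F.card = m := by
    rw [← hTopCard]
    exact Finset.card_filter_add_card_filter_not _
  -- P is pair-invariant
  have hPinv : ∀ x ∈ P, pair x ∈ P := by
    intro x hx
    rw [hPdef, Finset.mem_filter, hTop, Finset.mem_filter] at hx ⊢
    exact ⟨⟨Finset.mem_univ _, hx.2⟩, by rw [hinv]; exact hx.1.2⟩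
  -- x ∈ F → pair x ∉ F
  have hFpair : ∀ x, x ∈ F → pair x ∉ F := by
    intro x hx hpx
    rw [hFdef, Finset.mem_filter, hTop, Finset.mem_filter] at hx hpx
    exact hx.2 hpx.1.2
  set f₀ : {f : Fin (2*n) → Bool // ∀ x, f (pair x) = !(f x)} := omega0 pair hinv hnf with hf₀
  set c : ℕ := (P.filter (fun x => f₀.1 x = true)).card with hc
  have hPc : P.card = 2 * c := by
    have := half_card pair hinv f₀ P hPinv
    omega
  have hFc : F.card = m - 2*c := by omega
  refine ⟨c, by omega, ?_⟩
  -- the restriction map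
  set Φ : {f : Fin (2*n) → Bool // ∀ x, f (pair x) = !(f x)} → (↥F → Bool) := fun f x => f.1 x.1 with hΦ
  set wt : (↥F → Bool) → ℕ := fun g => (Finset.univ.filter (fun x => g x = true)).card
    with hwt
  -- event rewritten through Φ
  have hKdecomp : ∀ f : {f : Fin (2*n) → Bool // ∀ x, f (pair x) = !(f x)},
      (Finset.univ.filter (fun x => x.val < m ∧ f.1 x = true)).card = c + wt (Φ f) := by
    intro f
    have h1 : Finset.univ.filter (fun x : Fin (2*n) => x.val < m ∧ f.1 x = true)
        = P.filter (fun x => f.1 x = true) ∪ F.filter (fun x => f.1 x = true) := by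
      ext x
      simp only [Finset.mem_union, Finset.mem_filter, Finset.mem_univ, true_and,
        hPdef, hFdef, hTop]
      tauto
    have hdisj : Disjoint (P.filter (fun x => f.1 x = true))
        (F.filter (fun x => f.1 x = true)) := by
      rw [Finset.disjoint_left]
      intro x hx hy
      rw [Finset.mem_filter, hPdef, Finset.mem_filter] at hx
      rw [Finset.mem_filter, hFdef, Finset.mem_filter] at hy
      exact hy.1.2 hx.1.2
    have hPhalf : (P.filter (fun x => f.1 x = true)).card = c := by
      have := half_card pair hinv f P hPinv
      omega
    have hwteq : (F.filter (fun x => f.1 x = true)).card = wt (Φ f) := by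
      apply Finset.card_bij (fun x hx => (⟨x, (Finset.mem_filter.mp hx).1⟩ : ↥F))
      · intro x hx
        rw [Finset.mem_filter]
        exact ⟨Finset.mem_univ _, (Finset.mem_filter.mp hx).2⟩
      · intro x hx y hy h
        exact congrArg Subtype.val h
      · intro y hy
        exact ⟨y.1, Finset.mem_filter.mpr ⟨y.2, (Finset.mem_filter.mp hy).2⟩, Subtype.ext rfl⟩
    rw [h1, Finset.card_union_of_disjoint hdisj, hPhalf, hwteq]
  -- all fibers of Φ have the same cardinality
  have hfiber : ∀ g g' : ↥F → Bool,
      (Finset.univ.filter (fun f : {f : Fin (2*n) → Bool // ∀ x, f (pair x) = !(f x)} => Φ f = g)).card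
        = (Finset.univ.filter (fun f : {f : Fin (2*n) → Bool // ∀ x, f (pair x) = !(f x)} => Φ f = g')).card := by
    intro g g'
    set d : Fin (2*n) → Bool := fun x =>
      if hx : x ∈ F then xor (g ⟨x,hx⟩) (g' ⟨x,hx⟩)
      else if hp : pair x ∈ F then xor (g ⟨pair x,hp⟩) (g' ⟨pair x,hp⟩)
      else false with hd
    have hdpair : ∀ x, d (pair x) = d x := by
      intro x
      by_cases hx : x ∈ F
      · have h1 : pair x ∉ F := hFpair x hx
        have h2 : pair (pair x) ∈ F := by rw [hinv]; exact hx
        rw [hd]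
        simp only [dif_neg h1, dif_pos h2, dif_pos hx]
        congr 1 <;> exact congrArg _ (Subtype.ext (hinv x))
      · by_cases hp : pair x ∈ F
        · have h3 : pair (pair x) ∉ F := by rw [hinv]; exact hx
          rw [hd]
          simp only [dif_pos hp, dif_neg hx, dif_neg h3]
        · have h3 : pair (pair x) ∉ F := by rw [hinv]; exact hx
          rw [hd]
          simp only [dif_neg hx, dif_neg hp, dif_neg h3]
    set Ψ : {f : Fin (2*n) → Bool // ∀ x, f (pair x) = !(f x)} → {f : Fin (2*n) → Bool // ∀ x, f (pair x) = !(f x)} := fun f => ⟨fun x => xor (f.1 x) (d x), by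
      intro x
      show ((f.1 (pair x)) ^^ (d (pair x))) = (!((f.1 x) ^^ (d x)))
      rw [f.2 x, hdpair x, Bool.not_xor]⟩ with hΨ
    have hΨΨ : ∀ f : {f : Fin (2*n) → Bool // ∀ x, f (pair x) = !(f x)}, Ψ (Ψ f) = f := by
      intro f
      apply Subtype.ext
      funext x
      show xor (xor (f.1 x) (d x)) (d x) = f.1 x
      cases f.1 x <;> cases d x <;> rfl
    apply Finset.card_bij' (fun f _ => Ψ f) (fun f _ => Ψ f)
    · intro f hf
      rw [Finset.mem_filter] at hf ⊢
      refine ⟨Finset.mem_univ _, ?_⟩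
      funext x
      show xor (f.1 x.1) (d x.1) = g' x
      have hfx : f.1 x.1 = g x := congrFun hf.2 x
      rw [hfx, hd]
      simp only [dif_pos x.2]
      have : (⟨x.1, x.2⟩ : ↥F) = x := Subtype.ext rfl
      rw [this]
      cases g x <;> cases g' x <;> rfl
    · intro f hf
      rw [Finset.mem_filter] at hf ⊢
      refine ⟨Finset.mem_univ _, ?_⟩
      funext x
      show xor (f.1 x.1) (d x.1) = g x
      have hfx : f.1 x.1 = g' x := congrFun hf.2 x
      rw [hfx, hd]
      simp only [dif_pos x.2]
      have : (⟨x.1, x.2⟩ : ↥F) = x := Subtype.ext rfl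
      rw [this]
      cases g x <;> cases g' x <;> rfl
    · intro f hf; exact hΨΨ f
    · intro f hf; exact hΨΨ f
  set k : ℕ := (Finset.univ.filter (fun f : {f : Fin (2*n) → Bool // ∀ x, f (pair x) = !(f x)} => Φ f = Φ f₀)).card with hk
  have hk1 : 1 ≤ k := by
    rw [hk]
    apply Finset.card_pos.mpr
    exact ⟨f₀, Finset.mem_filter.mpr ⟨Finset.mem_univ _, rfl⟩⟩
  have hfiberk : ∀ g : ↥F → Bool,
      (Finset.univ.filter (fun f : {f : Fin (2*n) → Bool // ∀ x, f (pair x) = !(f x)} => Φ f = g)).card = k := by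
    intro g; rw [hk]; exact hfiber g (Φ f₀)
  -- total count
  have hΩcard : (Fintype.card {f : Fin (2*n) → Bool // ∀ x, f (pair x) = !(f x)} : ℕ) = 2^(m - 2*c) * k := by
    rw [← Finset.card_univ]
    rw [Finset.card_eq_sum_card_fiberwise
      (f := Φ) (t := Finset.univ) (fun x _ => Finset.mem_univ _)]
    rw [Finset.sum_congr rfl (fun g _ => hfiberk g)]
    rw [Finset.sum_const, smul_eq_mul, Finset.card_univ]
    congr 1
    rw [Fintype.card_fun, Fintype.card_bool, Fintype.card_coe, hFc]
  -- event count
  have hEcard : (Finset.univ.filter (fun f : {f : Fin (2*n) → Bool // ∀ x, f (pair x) = !(f x)} =>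
      i ≤ (Finset.univ.filter (fun x => x.val < m ∧ f.1 x = true)).card)).card
      = (Finset.univ.filter (fun g : ↥F → Bool => i ≤ c + wt g)).card * k := by
    have hE1 : Finset.univ.filter (fun f : {f : Fin (2*n) → Bool // ∀ x, f (pair x) = !(f x)} =>
        i ≤ (Finset.univ.filter (fun x => x.val < m ∧ f.1 x = true)).card)
        = Finset.univ.filter (fun f : {f : Fin (2*n) → Bool // ∀ x, f (pair x) = !(f x)} => i ≤ c + wt (Φ f)) := by
      apply Finset.filter_congr
      intro f _
      rw [hKdecomp f]
    rw [hE1]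
    rw [Finset.card_eq_sum_card_fiberwise (f := Φ)
      (t := Finset.univ.filter (fun g : ↥F → Bool => i ≤ c + wt g))
      (fun f hf => by
        rw [Finset.mem_coe, Finset.mem_filter] at hf
        rw [Finset.mem_coe, Finset.mem_filter]
        exact ⟨Finset.mem_univ _, hf.2⟩)]
    have hstep : ∀ g ∈ Finset.univ.filter (fun g : ↥F → Bool => i ≤ c + wt g),
        ((Finset.univ.filter
            (fun f : {f : Fin (2*n) → Bool // ∀ x, f (pair x) = !(f x)} =>
              i ≤ c + wt (Φ f))).filter (fun f => Φ f = g)).card = k := by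
      intro g hg
      have heq : (Finset.univ.filter
            (fun f : {f : Fin (2*n) → Bool // ∀ x, f (pair x) = !(f x)} =>
              i ≤ c + wt (Φ f))).filter (fun f => Φ f = g)
          = Finset.univ.filter
            (fun f : {f : Fin (2*n) → Bool // ∀ x, f (pair x) = !(f x)} => Φ f = g) := by
        ext f
        simp only [Finset.mem_filter, Finset.mem_univ, true_and]
        constructor
        · rintro ⟨_, h2⟩; exact h2
        · intro h2
          refine ⟨?_, h2⟩
          rw [h2]
          exact (Finset.mem_filter.mp hg).2
      rw [heq, hfiberk g]
    rw [Finset.sum_congr rfl hstep]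
    rw [Finset.sum_const, smul_eq_mul]
  -- count of good g's
  have hgood : (Finset.univ.filter (fun g : ↥F → Bool => i ≤ c + wt g)).card
      = Tsum (m - 2*c) (i - c) := by
    have hwtle : ∀ g : ↥F → Bool, wt g ∈ Finset.range (m - 2*c + 1) := by
      intro g
      rw [Finset.mem_range, Nat.lt_succ_iff, hwt]
      calc (Finset.univ.filter (fun x : ↥F => g x = true)).card
          ≤ (Finset.univ : Finset ↥F).card := Finset.card_filter_le _ _
        _ = m - 2*c := by rw [Finset.card_univ, Fintype.card_coe, hFc]
    rw [Finset.card_eq_sum_card_fiberwise (f := wt)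
      (t := Finset.range (m - 2*c + 1)) (fun g _ => hwtle g), Tsum]
    apply Finset.sum_congr rfl
    intro t ht
    by_cases hit : i - c ≤ t
    · rw [if_pos hit]
      have hict : i ≤ c + t := by rw [Nat.add_comm]; exact Nat.sub_le_iff_le_add.mp hit
      have : (Finset.univ.filter (fun g : ↥F → Bool => i ≤ c + wt g)).filter
          (fun g => wt g = t) = Finset.univ.filter (fun g : ↥F → Bool => wt g = t) := by
        ext g
        simp only [Finset.mem_filter, Finset.mem_univ, true_and]
        constructor
        · rintro ⟨_, h2⟩; exact h2
        · intro h2; exact ⟨by rw [h2]; exact hict, h2⟩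
      rw [this]
      -- number of weight-t functions is choose
      have : (Finset.univ.filter (fun g : ↥F → Bool => wt g = t)).card
          = (m - 2*c).choose t := by
        rw [← hFc, ← Fintype.card_coe F, ← Finset.card_univ,
          ← Finset.card_powersetCard t (Finset.univ : Finset ↥F)]
        apply Finset.card_bij
          (fun g _ => Finset.univ.filter (fun x : ↥F => g x = true))
        · intro g hg
          rw [Finset.mem_powersetCard]
          exact ⟨Finset.filter_subset _ _, (Finset.mem_filter.mp hg).2⟩
        · intro g hg g' hg' h
          funext x
          have := Finset.ext_iff.mp h x
          simp only [Finset.mem_filter, Finset.mem_univ, true_and] at this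
          cases hgx : g x
          · cases hg'x : g' x
            · rfl
            · exact absurd (this.mpr hg'x) (by rw [hgx]; simp)
          · rw [this.mp hgx]
        · intro S hS
          rw [Finset.mem_powersetCard] at hS
          have hset : Finset.univ.filter
              (fun x : ↥F => (fun y : ↥F => decide (y ∈ S)) x = true) = S := by
            ext x
            simp
          refine ⟨fun y => decide (y ∈ S), Finset.mem_filter.mpr ⟨Finset.mem_univ _, ?_⟩,
            hset⟩
          show (Finset.univ.filter
            (fun x : ↥F => (fun y : ↥F => decide (y ∈ S)) x = true)).card = t
          rw [hset, hS.2]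
      rw [this]
    · rw [if_neg hit]
      have : (Finset.univ.filter (fun g : ↥F → Bool => i ≤ c + wt g)).filter
          (fun g => wt g = t) = ∅ := by
        rw [Finset.filter_eq_empty_iff]
        intro g hg
        rw [Finset.mem_filter] at hg
        intro h2
        rw [h2] at hg
        exact hit (Nat.sub_le_iff_le_add.mpr (by rw [Nat.add_comm]; exact hg.2))
      rw [this, Finset.card_empty]
  -- put it together
  have hkne : (k:ℝ) ≠ 0 := Nat.cast_ne_zero.mpr (Nat.one_le_iff_ne_zero.mp hk1)
  have result : ((Finset.univ.filter
        (fun f : {f : Fin (2*n) → Bool // ∀ x, f (pair x) = !(f x)} =>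
          i ≤ (Finset.univ.filter (fun x => x.val < m ∧ f.1 x = true)).card)).card : ℝ)
      / (Fintype.card {f : Fin (2*n) → Bool // ∀ x, f (pair x) = !(f x)} : ℝ)
      = (Tsum (m - 2*c) (i - c) : ℝ) / 2^(m - 2*c) := by
    rw [hEcard, hgood, hΩcard]
    push_cast
    rw [mul_div_mul_right _ _ hkne]
  simp only [uniformPr]
  convert result using 4
  ext f
  simp [Finset.mem_filter]

end Counting


lemma card_filter_val_lt (n m : ℕ) (hm : m ≤ 2*n) :
    (Finset.univ.filter (fun x : Fin (2*n) => x.val < m)).card = m := by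
  conv_rhs => rw [← Finset.card_range m]
  refine Finset.card_bij'
    (fun (x : Fin (2*n)) (_ : x ∈ Finset.univ.filter (fun x : Fin (2*n) => x.val < m)) => x.val)
    (fun b (hb : b ∈ Finset.range m) =>
      (⟨b, by have := Finset.mem_range.mp hb; omega⟩ : Fin (2*n))) ?_ ?_ ?_ ?_
  · intro x hx
    simp only [Finset.mem_filter] at hx
    exact Finset.mem_range.mpr hx.2
  · intro b hb
    simp only [Finset.mem_filter]
    exact ⟨Finset.mem_univ _, Finset.mem_range.mp hb⟩
  · intro x hx
    exact Fin.ext rfl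
  · intro b hb
    rfl

lemma uniformPr_congr {α : Type*} [Fintype α] (E E' : α → Prop) (h : ∀ x, E x ↔ E' x) :
    uniformPr E = uniformPr E' := by
  have hfe : Finset.univ.filter E = Finset.univ.filter E' := by
    ext x
    simp [h x]
  unfold uniformPr
  rw [hfe]

lemma real_lower (m i c : ℕ) (h : Tsum m i ≤ 4^c * Tsum (m-2*c) (i-c)) (hc : 2*c ≤ m) :
    (Tsum m i : ℝ)/2^m ≤ (Tsum (m-2*c) (i-c) : ℝ)/2^(m-2*c) := by
  rw [div_le_div_iff₀ (by positivity) (by positivity)]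
  have h2 : (2:ℝ)^m = 4^c * 2^(m-2*c) := by
    rw [show (4:ℝ) = 2^2 by norm_num, ← pow_mul, ← pow_add]
    congr 1
    omega
  calc (Tsum m i : ℝ) * 2^(m-2*c)
      ≤ ((4^c * Tsum (m-2*c) (i-c) : ℕ) : ℝ) * 2^(m-2*c) := by
        apply mul_le_mul_of_nonneg_right _ (by positivity)
        exact_mod_cast h
    _ = (Tsum (m-2*c) (i-c) : ℝ) * 2^m := by
        push_cast
        rw [h2]
        ring

lemma real_upper (m i c : ℕ) (h : 4^c * Tsum (m-2*c) (i-c) ≤ Tsum m i) (hc : 2*c ≤ m) :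
    (Tsum (m-2*c) (i-c) : ℝ)/2^(m-2*c) ≤ (Tsum m i : ℝ)/2^m := by
  rw [div_le_div_iff₀ (by positivity) (by positivity)]
  have h2 : (2:ℝ)^m = 4^c * 2^(m-2*c) := by
    rw [show (4:ℝ) = 2^2 by norm_num, ← pow_mul, ← pow_add]
    congr 1
    omega
  calc (Tsum (m-2*c) (i-c) : ℝ) * 2^m
      = ((4^c * Tsum (m-2*c) (i-c) : ℕ) : ℝ) * 2^(m-2*c) := by
        push_cast
        rw [h2]
        ring
    _ ≤ (Tsum m i : ℝ) * 2^(m-2*c) := by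
        apply mul_le_mul_of_nonneg_right _ (by positivity)
        exact_mod_cast h

lemma p_real (i j : ℕ) (hi : 1 ≤ i) :
    ∑ k ∈ Finset.range j, ((i-1+k).choose k : ℝ) / 2^(i+k)
      = (Tsum (i+j-1) i : ℝ) / 2^(i+j-1) := by
  have hid := p_identity i hi j
  have hcast : (∑ k ∈ Finset.range j, ((i-1+k).choose k : ℝ) * 2^(j-1-k))
      = (Tsum (i+j-1) i : ℝ) := by
    exact_mod_cast congrArg (fun x : ℕ => (x : ℝ)) hid
  rw [eq_div_iff (by positivity)]
  rw [← hcast, Finset.sum_mul]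
  apply Finset.sum_congr rfl
  intro k hk
  have hk' := Finset.mem_range.mp hk
  have h2 : (2:ℝ)^(i+j-1) = 2^(i+k) * 2^(j-1-k) := by
    rw [← pow_add]
    congr 1
    omega
  rw [h2]
  field_simp

lemma event_equiv (n i j : ℕ) (hi1 : 1 ≤ i) (hj1 : 1 ≤ j) (hi : i ≤ n) (hj : j ≤ n)
    (a : Fin (2*n) → ℝ) (ha : StrictAnti a)
    (pair : Fin (2*n) → Fin (2*n)) (hinv : ∀ x, pair (pair x) = x)
    (f : {f : Fin (2*n) → Bool // ∀ x, f (pair x) = !(f x)}) :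
    (kthLargest ((Finset.univ.filter (fun x => f.1 x = true)).image a) i >
      kthLargest ((Finset.univ.filter (fun x => f.1 x = false)).image a) j)
    ↔ i ≤ (Finset.univ.filter (fun x => x.val < i+j-1 ∧ f.1 x = true)).card := by
  classical
  set m := i + j - 1 with hmdef
  have hn1 : 1 ≤ n := le_trans hi1 hi
  have hm1 : 1 ≤ m := by omega
  have hm2n : m ≤ 2*n := by omega
  have hmlt : m - 1 < 2*n := by omega
  set A : Finset (Fin (2*n)) := Finset.univ.filter (fun x => f.1 x = true) with hA
  set B : Finset (Fin (2*n)) := Finset.univ.filter (fun x => f.1 x = false) with hB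
  have hcardA : A.card = n := by
    have h1 := half_card pair hinv f Finset.univ (fun x _ => Finset.mem_univ _)
    have h2 : (Finset.univ : Finset (Fin (2*n))).card = 2*n := by
      rw [Finset.card_univ, Fintype.card_fin]
    rw [hA]
    omega
  have hBneg : B = Finset.univ.filter (fun x => ¬ f.1 x = true) := by
    rw [hB]
    apply Finset.filter_congr
    intro x _
    simp
  have hcardB : B.card = n := by
    have hABc : A.card = B.card := by
      rw [hA, hB]
      apply Finset.card_bij (fun x _ => pair x)
      · intro x hx
        rw [Finset.mem_filter] at hx ⊢
        refine ⟨Finset.mem_univ _, ?_⟩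
        rw [f.2 x, hx.2]
        rfl
      · intro x hx y hy hxy
        exact pair_inj pair hinv hxy
      · intro y hy
        rw [Finset.mem_filter] at hy
        refine ⟨pair y, Finset.mem_filter.mpr ⟨Finset.mem_univ _, ?_⟩, hinv y⟩
        rw [f.2 y, hy.2]
        rfl
    omega
  set X := A.image a with hX
  set Y := B.image a with hY
  have hcardX : X.card = n := by
    rw [hX, Finset.card_image_of_injective _ ha.injective, hcardA]
  have hcardY : Y.card = n := by
    rw [hY, Finset.card_image_of_injective _ ha.injective, hcardB]
  set v : ℝ := a ⟨m-1, hmlt⟩ with hv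
  have hvx : ∀ x : Fin (2*n), (v ≤ a x ↔ x.val < m) := by
    intro x
    rw [hv, ha.le_iff_ge]
    rw [Fin.le_def]
    simp only []
    omega
  set K := (Finset.univ.filter (fun x => x.val < m ∧ f.1 x = true)).card with hK
  set K' := (Finset.univ.filter (fun x => x.val < m ∧ f.1 x = false)).card with hK'
  have hXcount : (X.filter (fun y => v ≤ y)).card = K := by
    rw [hX, Finset.filter_image, Finset.card_image_of_injective _ ha.injective, hK]
    congr 1
    rw [hA, Finset.filter_filter]
    apply Finset.filter_congr
    intro x _
    rw [hvx x]
    tauto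
  have hYcount : (Y.filter (fun y => v ≤ y)).card = K' := by
    rw [hY, Finset.filter_image, Finset.card_image_of_injective _ ha.injective, hK']
    congr 1
    rw [hB, Finset.filter_filter]
    apply Finset.filter_congr
    intro x _
    rw [hvx x]
    tauto
  have hKK' : K + K' = m := by
    have h1 := Finset.card_filter_add_card_filter_not
      (s := Finset.univ.filter (fun x : Fin (2*n) => x.val < m)) (p := fun x => f.1 x = true)
    rw [card_filter_val_lt n m hm2n] at h1
    rw [hK, hK']
    rw [Finset.filter_filter, Finset.filter_filter] at h1
    have e1 : Finset.univ.filter (fun x : Fin (2*n) => x.val < m ∧ f.1 x = true)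
        = Finset.univ.filter (fun a_1 : Fin (2*n) => a_1.val < m ∧ f.1 a_1 = true) := rfl
    have e2 : Finset.univ.filter (fun x : Fin (2*n) => x.val < m ∧ f.1 x = false)
        = Finset.univ.filter (fun a_1 : Fin (2*n) => a_1.val < m ∧ ¬ f.1 a_1 = true) := by
      apply Finset.filter_congr
      intro x _
      simp
    rw [e1, e2]
    omega
  have hKm : K ≤ m := by omega
  constructor
  · intro hgt
    by_contra hcon
    push_neg at hcon
    -- K ≤ i - 1
    have hXlt : kthLargest X i < v := by
      apply kthLargest_lt X i v (by omega)
      rw [hXcount]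
      omega
    have hYge : v ≤ kthLargest Y j := by
      apply le_kthLargest Y j v hj1
      rw [hYcount]
      omega
    have := lt_of_lt_of_le hXlt hYge
    exact absurd hgt (not_lt.mpr (le_of_lt this))
  · intro hle
    have hXge : v ≤ kthLargest X i := by
      apply le_kthLargest X i v hi1
      rw [hXcount]
      exact hle
    have hYlt : kthLargest Y j < v := by
      apply kthLargest_lt Y j v (by omega)
      rw [hYcount]
      omega
    exact lt_of_lt_of_le hYlt hXge



theorem cross_rank_domination_monotonicity (n i j : ℕ)
    (hi1 : 1 ≤ i) (hj1 : 1 ≤ j) (hi : i ≤ n) (hj : j ≤ n)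
    (a : Fin (2 * n) → ℝ) (ha : StrictAnti a)
    (pair : Fin (2 * n) → Fin (2 * n))
    (hinv : ∀ x, pair (pair x) = x) (hnf : ∀ x, pair x ≠ x) :
    (i ≤ j →
      uniformPr (fun f : {f : Fin (2 * n) → Bool // ∀ x, f (pair x) = !(f x)} =>
          kthLargest ((Finset.univ.filter (fun x => f.1 x = true)).image a) i >
            kthLargest ((Finset.univ.filter (fun x => f.1 x = false)).image a) j) ≥
        ∑ k ∈ Finset.range j, (Nat.choose (i - 1 + k) k : ℝ) / 2 ^ (i + k)) ∧
    (j ≤ i →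
      uniformPr (fun f : {f : Fin (2 * n) → Bool // ∀ x, f (pair x) = !(f x)} =>
          kthLargest ((Finset.univ.filter (fun x => f.1 x = true)).image a) i >
            kthLargest ((Finset.univ.filter (fun x => f.1 x = false)).image a) j) ≤
        ∑ k ∈ Finset.range j, (Nat.choose (i - 1 + k) k : ℝ) / 2 ^ (i + k)) := by
  have hPr : uniformPr (fun f : {f : Fin (2 * n) → Bool // ∀ x, f (pair x) = !(f x)} =>
      kthLargest ((Finset.univ.filter (fun x => f.1 x = true)).image a) i >
        kthLargest ((Finset.univ.filter (fun x => f.1 x = false)).image a) j)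
      = uniformPr (fun f : {f : Fin (2 * n) → Bool // ∀ x, f (pair x) = !(f x)} =>
          i ≤ (Finset.univ.filter (fun x => x.val < i+j-1 ∧ f.1 x = true)).card) := by
    apply uniformPr_congr
    intro f
    exact event_equiv n i j hi1 hj1 hi hj a ha pair hinv f
  have hm2n : i + j - 1 ≤ 2 * n := by omega
  obtain ⟨c, hc, hPr2⟩ := count_main pair (i+j-1) hinv hnf i hm2n
  have hpsum : ∑ k ∈ Finset.range j, ((i-1+k).choose k : ℝ) / 2^(i+k)
      = (Tsum (i+j-1) i : ℝ) / 2^(i+j-1) := p_real i j hi1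
  constructor
  · intro hij
    rw [hPr, hPr2, hpsum, ge_iff_le]
    apply real_lower _ _ _ _ hc
    exact chain_lower (i+j-1) i (by omega) c hc
  · intro hij
    rw [hPr, hPr2, hpsum]
    apply real_upper _ _ _ _ hc
    exact chain_upper (i+j-1) i (by omega) c hc
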